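/- Let A ∈ ℝ^{N×N} with ρ(A) < 1, C ∈ ℝ^{N×d}, φ : M → M a bijection, ω : M → ℝ^d bounded, m ∈ M, X₀ ∈ ℝ^N. Define Xₜ = AXₜ₋₁ + C ω(φᵗ(m)) and f(x) = ∑_{k=0}^∞ Aᵏ C ω(φ^{-k}(x)). Then ‖Xₜ − f(φᵗ(m))‖ → 0 as t → ∞. -/

import Mathlib

open Matrix Filter Topology MeasureTheory ProbabilityTheory
open scoped ENNReal NNReal

attribute [local instance] Matrix.linftyOpNormedRing Matrix.linftyOpNormedAddCommGroup

attribute [local instance] Matrix.linftyOpNormedAlgebra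

/-- The spectral radius of a real square matrix: the maximum modulus of its complex
eigenvalues. -/
noncomputable def specRad {N : ℕ} (A : Matrix (Fin N) (Fin N) ℝ) : ℝ :=
  sSup ((fun z : ℂ => ‖z‖) '' spectrum ℂ (A.map Complex.ofReal))

section aux

variable {N : ℕ}

noncomputable local instance : CompleteSpace (Matrix (Fin N) (Fin N) ℂ) :=
  FiniteDimensional.complete ℂ _

lemma norm_map_ofReal (B : Matrix (Fin N) (Fin N) ℝ) : ‖B.map Complex.ofReal‖ = ‖B‖ := by
  rw [Matrix.linfty_opNorm_def, Matrix.linfty_opNorm_def]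
  simp [Matrix.map_apply, Complex.norm_real]

lemma key_bound (A : Matrix (Fin N) (Fin N) ℝ) (hA : specRad A < 1) :
    Summable (fun n : ℕ => ‖A ^ n‖) ∧ Tendsto (fun n : ℕ => ‖A ^ n‖) atTop (𝓝 0) := by
  set B : Matrix (Fin N) (Fin N) ℂ := A.map Complex.ofReal with hB
  have hpow : ∀ n : ℕ, B ^ n = (A ^ n).map Complex.ofReal := by
    intro n
    exact (map_pow (Complex.ofRealHom.mapMatrix :
      Matrix (Fin N) (Fin N) ℝ →+* Matrix (Fin N) (Fin N) ℂ) A n).symm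
  have hnorm : ∀ n : ℕ, ‖B ^ n‖ = ‖A ^ n‖ := fun n => by rw [hpow, norm_map_ofReal]
  -- spectral radius < 1
  have hsr : spectralRadius ℂ B < 1 := by
    have hcpt : IsCompact (spectrum ℂ B) := spectrum.isCompact B
    have hbdd : BddAbove ((fun z : ℂ => ‖z‖) '' spectrum ℂ B) :=
      (hcpt.image continuous_norm).bddAbove
    have hle : spectralRadius ℂ B ≤ ENNReal.ofReal (specRad A) := by
      rw [spectralRadius]
      refine iSup₂_le fun k hk => ?_
      rw [← ENNReal.ofReal_coe_nnreal, coe_nnnorm]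
      refine ENNReal.ofReal_le_ofReal ?_
      have : ‖k‖ ∈ (fun z : ℂ => ‖z‖) '' spectrum ℂ B := ⟨k, hk, rfl⟩
      exact le_csSup hbdd this
    exact hle.trans_lt (ENNReal.ofReal_lt_one.2 hA)
  obtain ⟨r, hr1, hr2⟩ := ENNReal.lt_iff_exists_nnreal_btwn.mp hsr
  have hr1' : (r : ℝ) < 1 := by exact_mod_cast hr2
  have hr0 : (0 : ℝ) ≤ r := r.coe_nonneg
  have hgel := spectrum.pow_nnnorm_pow_one_div_tendsto_nhds_spectralRadius B
  have hev : ∀ᶠ n : ℕ in atTop, (‖B ^ n‖₊ : ENNReal) ^ (1 / (n : ℝ)) < (r : ENNReal) :=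
    hgel.eventually_lt_const hr1
  have hev2 : ∀ᶠ n : ℕ in atTop, ‖A ^ n‖ ≤ (r : ℝ) ^ n := by
    filter_upwards [hev, eventually_ge_atTop 1] with n hn hn1
    have hn0 : (n : ℝ) ≠ 0 := by positivity
    have : ((‖B ^ n‖₊ : ENNReal) ^ (1 / (n : ℝ))) ^ (n : ℝ) < (r : ENNReal) ^ (n : ℝ) :=
      ENNReal.rpow_lt_rpow hn (by positivity)
    rw [← ENNReal.rpow_mul, one_div_mul_cancel hn0, ENNReal.rpow_one,
      ENNReal.rpow_natCast, ← ENNReal.coe_pow] at this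
    have h2 : ‖B ^ n‖₊ ≤ r ^ n := (ENNReal.coe_lt_coe.mp this).le
    have := (NNReal.coe_le_coe.mpr h2)
    simpa [hnorm n] using this
  constructor
  · refine Summable.of_norm_bounded_eventually_nat (g := fun n => (r : ℝ) ^ n)
      (summable_geometric_of_lt_one hr0 hr1') ?_
    filter_upwards [hev2] with n hn
    simpa using hn
  · refine squeeze_zero' (Eventually.of_forall fun n => norm_nonneg _) hev2 ?_
    exact tendsto_pow_atTop_nhds_zero_of_lt_one hr0 hr1'

end aux

theorem stmt_11 {N d : ℕ} {M : Type*} (A : Matrix (Fin N) (Fin N) ℝ)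
    (hA : specRad A < 1) (C : Matrix (Fin N) (Fin d) ℝ)
    (φ : M ≃ M) (ω : M → Fin d → ℝ) (hω : ∃ K : ℝ, ∀ x, ‖ω x‖ ≤ K) (m : M)
    (X : ℕ → Fin N → ℝ)
    (hX : ∀ t : ℕ, X (t + 1) = A.mulVec (X t) + C.mulVec (ω ((⇑φ)^[t + 1] m)))
    (f : M → Fin N → ℝ)
    (hf : ∀ x, f x = ∑' k : ℕ, (A ^ k * C).mulVec (ω ((⇑φ.symm)^[k] x))) :
    Tendsto (fun t : ℕ => ‖X t - f ((⇑φ)^[t] m)‖) atTop (𝓝 0) := by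
  obtain ⟨K, hK⟩ := hω
  obtain ⟨hsum, htend⟩ := key_bound A hA
  -- summability of the defining series
  have hsummable : ∀ x : M,
      Summable (fun k : ℕ => (A ^ k * C).mulVec (ω ((⇑φ.symm)^[k] x))) := by
    intro x
    refine Summable.of_norm_bounded (g := fun k => ‖A ^ k‖ * (‖C‖ * K))
      (hsum.mul_right _) fun k => ?_
    calc ‖(A ^ k * C).mulVec (ω ((⇑φ.symm)^[k] x))‖
        ≤ ‖A ^ k * C‖ * ‖ω ((⇑φ.symm)^[k] x)‖ := Matrix.linfty_opNorm_mulVec _ _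
      _ ≤ (‖A ^ k‖ * ‖C‖) * K := by
          have h1 := Matrix.linfty_opNorm_mul (A ^ k) C
          exact mul_le_mul h1 (hK _) (norm_nonneg _)
            (mul_nonneg (norm_nonneg _) (norm_nonneg _))
      _ = ‖A ^ k‖ * (‖C‖ * K) := by ring
  -- functional equation
  have hfe : ∀ y : M, f (φ y) = C.mulVec (ω (φ y)) + A.mulVec (f y) := by
    intro y
    have hs := hsummable (φ y)
    rw [hf, hf, hs.tsum_eq_zero_add]
    congr 1
    · simp
    · have hiter : ∀ k : ℕ, (⇑φ.symm)^[k + 1] (φ y) = (⇑φ.symm)^[k] y := by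
        intro k
        rw [Function.iterate_succ_apply, Equiv.symm_apply_apply]
      calc (∑' k : ℕ, (A ^ (k + 1) * C).mulVec (ω ((⇑φ.symm)^[k + 1] (φ y))))
          = ∑' k : ℕ, (LinearMap.toContinuousLinearMap A.mulVecLin)
              ((A ^ k * C).mulVec (ω ((⇑φ.symm)^[k] y))) := by
            refine tsum_congr fun k => ?_
            rw [hiter k, pow_succ', Matrix.mul_assoc, ← Matrix.mulVec_mulVec]
            simp [Matrix.mulVecLin_apply]
        _ = A.mulVec (∑' k : ℕ, (A ^ k * C).mulVec (ω ((⇑φ.symm)^[k] y))) := by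
            rw [← ContinuousLinearMap.map_tsum _ (hsummable y)]
            simp [Matrix.mulVecLin_apply]
  -- error recursion
  have herr : ∀ t : ℕ, X t - f ((⇑φ)^[t] m) = (A ^ t).mulVec (X 0 - f m) := by
    intro t
    induction t with
    | zero => simp
    | succ t ih =>
      have h1 : (⇑φ)^[t+1] m = φ ((⇑φ)^[t] m) := Function.iterate_succ_apply' _ _ _
      rw [hX t, h1, hfe ((⇑φ)^[t] m)]
      have : A.mulVec (X t) + C.mulVec (ω (φ ((⇑φ)^[t] m)))
          - (C.mulVec (ω (φ ((⇑φ)^[t] m))) + A.mulVec (f ((⇑φ)^[t] m)))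
          = A.mulVec (X t - f ((⇑φ)^[t] m)) := by
        rw [Matrix.mulVec_sub]; abel
      rw [this, ih, Matrix.mulVec_mulVec, ← pow_succ']
  have hb : ∀ t : ℕ, ‖X t - f ((⇑φ)^[t] m)‖ ≤ ‖A ^ t‖ * ‖X 0 - f m‖ := by
    intro t
    rw [herr t]
    exact Matrix.linfty_opNorm_mulVec _ _
  refine squeeze_zero (fun t => norm_nonneg _) hb ?_
  simpa using htend.mul_const ‖X 0 - f m‖
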